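/- Let p be a probability measure on a finite set S, Δ a signed measure with Δ(S) = 0, k* > 1, and V : S → ℝ with V ≥ 0 and ||V||_{L^∞(p)} = span of V over supp p (i.e., min over supp p is 0). Then sup over α ≥ ||V||_{L^∞(p)} of (1/k*)·|⟨Δ, (α - V)^{k*}⟩| / ⟨p, (α - V)^{k*-1}⟩ is at most 2·||Δ/p||_{L^∞(p)} · ||V||_{L^∞(p)}. -/

import Mathlib

open Real Set

lemma rpow_sub_rpow_le_aux {x y k : ℝ} (hy : 0 ≤ y) (hxy : y ≤ x) (hk : 1 ≤ k) :
    x ^ k - y ^ k ≤ k * x ^ (k - 1) * (x - y) := by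
  have hx : 0 ≤ x := hy.trans hxy
  have hbound : ∀ t ∈ Icc y x, ‖k * t ^ (k - 1)‖ ≤ k * x ^ (k - 1) := by
    intro t ht
    have ht0 : 0 ≤ t := hy.trans ht.1
    have h1 : t ^ (k - 1) ≤ x ^ (k - 1) :=
      Real.rpow_le_rpow ht0 ht.2 (by linarith)
    have h2 : 0 ≤ t ^ (k - 1) := Real.rpow_nonneg ht0 _
    rw [Real.norm_eq_abs, abs_of_nonneg (by positivity)]
    have hk0 : (0:ℝ) ≤ k := by linarith
    nlinarith
  have hderiv : ∀ t ∈ Icc y x,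
      HasDerivWithinAt (fun t : ℝ => t ^ k) (k * t ^ (k - 1)) (Icc y x) t := by
    intro t _
    exact (Real.hasDerivAt_rpow_const (Or.inr hk)).hasDerivWithinAt
  have := norm_image_sub_le_of_norm_deriv_le_segment' hderiv
    (fun t ht => hbound t (Set.Ico_subset_Icc_self ht)) x (right_mem_Icc.2 hxy)
  rw [Real.norm_eq_abs] at this
  calc x ^ k - y ^ k ≤ |x ^ k - y ^ k| := le_abs_self _
    _ ≤ k * x ^ (k - 1) * (x - y) := this

/-- Sensitivity bound for the `f_k`-dual functional: for `α ≥ ‖V‖_{L^∞(p)}`,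
`(1/k*)·|⟨Δ, (α-V)^{k*}⟩|/⟨p, (α-V)^{k*-1}⟩ ≤ 2·‖Δ/p‖_{L^∞(p)}·‖V‖_{L^∞(p)}`. -/
theorem stmt_13 {S : Type*} [Fintype S] (p Δ V : S → ℝ) (kstar : ℝ)
    (hp0 : ∀ s, 0 ≤ p s) (hp1 : ∑ s, p s = 1)
    (hΔsum : ∑ s, Δ s = 0) (hΔac : ∀ s, p s = 0 → Δ s = 0)
    (hk : 1 < kstar)
    (hV0 : ∀ s, 0 ≤ V s)
    (hVmin : sInf (V '' {s | 0 < p s}) = 0) :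
    ∀ α : ℝ, sSup (V '' {s | 0 < p s}) ≤ α →
      (1 / kstar) * |∑ s, Δ s * (α - V s) ^ kstar| /
          (∑ s, p s * (α - V s) ^ (kstar - 1)) ≤
        2 * sSup ((fun s => |Δ s / p s|) '' {s | 0 < p s}) *
          sSup (V '' {s | 0 < p s}) := by
  intro α hα
  set M := sSup (V '' {s | 0 < p s}) with hM
  set D := sSup ((fun s => |Δ s / p s|) '' {s | 0 < p s}) with hD
  -- supp nonempty
  have hsupp : ∃ s, 0 < p s := by
    by_contra h
    push_neg at h
    have : ∀ s, p s = 0 := fun s => le_antisymm (h s) (hp0 s)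
    simp [this] at hp1
  obtain ⟨s0, hs0⟩ := hsupp
  have hne : ({s | 0 < p s} : Set S).Nonempty := ⟨s0, hs0⟩
  have hbddV : BddAbove (V '' {s | 0 < p s}) := (Set.toFinite _).bddAbove
  have hbddD : BddAbove ((fun s => |Δ s / p s|) '' {s | 0 < p s}) :=
    (Set.toFinite _).bddAbove
  have hMV : ∀ s, 0 < p s → V s ≤ M := fun s hs =>
    le_csSup hbddV ⟨s, hs, rfl⟩
  have hM0 : 0 ≤ M := (hV0 s0).trans (hMV s0 hs0)
  have hD0 : 0 ≤ D := (abs_nonneg _).trans (le_csSup hbddD ⟨s0, hs0, rfl⟩)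
  have hΔle : ∀ s, |Δ s| ≤ D * p s := by
    intro s
    rcases eq_or_lt_of_le (hp0 s) with h | h
    · rw [hΔac s h.symm, ← h]; simp
    · have h1 : |Δ s / p s| ≤ D := le_csSup hbddD ⟨s, h, rfl⟩
      have h2 : |Δ s| = |Δ s / p s| * p s := by
        rw [abs_div, abs_of_pos h]; field_simp
      rw [h2]
      exact mul_le_mul_of_nonneg_right h1 h.le
  have hαM : M ≤ α := hα
  have hk0 : (0:ℝ) < kstar := by linarith
  -- denominator nonneg
  have hden0 : 0 ≤ ∑ s, p s * (α - V s) ^ (kstar - 1) := by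
    apply Finset.sum_nonneg
    intro s _
    rcases eq_or_lt_of_le (hp0 s) with h | h
    · rw [← h]; simp
    · have : 0 ≤ α - V s := by linarith [hMV s h]
      positivity
  rcases eq_or_lt_of_le hden0 with hden | hden
  · rw [← hden, div_zero]
    positivity
  -- main case
  rw [div_le_iff₀ hden]
  have key : |∑ s, Δ s * (α - V s) ^ kstar| ≤
      kstar * D * M * ∑ s, p s * (α - V s) ^ (kstar - 1) := by
    have hshift : ∑ s, Δ s * (α - V s) ^ kstar =
        ∑ s, Δ s * ((α - V s) ^ kstar - (α - M) ^ kstar) := by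
      simp only [mul_sub]
      rw [Finset.sum_sub_distrib, ← Finset.sum_mul, hΔsum, zero_mul, sub_zero]
    rw [hshift]
    calc |∑ s, Δ s * ((α - V s) ^ kstar - (α - M) ^ kstar)|
        ≤ ∑ s, |Δ s * ((α - V s) ^ kstar - (α - M) ^ kstar)| :=
          Finset.abs_sum_le_sum_abs _ _
      _ ≤ ∑ s, kstar * D * M * (p s * (α - V s) ^ (kstar - 1)) := by
          apply Finset.sum_le_sum
          intro s _
          rcases eq_or_lt_of_le (hp0 s) with h | h
          · rw [hΔac s h.symm, ← h]; simp
          · have hVs : V s ≤ M := hMV s h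
            have hy0 : 0 ≤ α - M := by linarith
            have hxy : α - M ≤ α - V s := by linarith
            have hd1 : (α - M) ^ kstar ≤ (α - V s) ^ kstar :=
              Real.rpow_le_rpow hy0 hxy hk0.le
            have hd2 : (α - V s) ^ kstar - (α - M) ^ kstar ≤
                kstar * (α - V s) ^ (kstar - 1) * ((α - V s) - (α - M)) :=
              rpow_sub_rpow_le_aux hy0 hxy hk.le
            rw [abs_mul, abs_of_nonneg (by linarith : (0:ℝ) ≤ (α - V s) ^ kstar - (α - M) ^ kstar)]
            have hpow0 : 0 ≤ (α - V s) ^ (kstar - 1) :=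
              Real.rpow_nonneg (by linarith) _
            have hΔs := hΔle s
            have hdiff : (α - V s) ^ kstar - (α - M) ^ kstar ≤
                kstar * (α - V s) ^ (kstar - 1) * M := by
              have : (α - V s) - (α - M) = M - V s := by ring
              rw [this] at hd2
              have h3 : kstar * (α - V s) ^ (kstar - 1) * (M - V s) ≤
                  kstar * (α - V s) ^ (kstar - 1) * M :=
                mul_le_mul_of_nonneg_left (by linarith [hV0 s]) (by positivity)
              linarith
            have habs0 : 0 ≤ |Δ s| := abs_nonneg _
            nlinarith [mul_le_mul hΔs hdiff (by linarith) (by positivity)]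
      _ = kstar * D * M * ∑ s, p s * (α - V s) ^ (kstar - 1) := by
          rw [Finset.mul_sum]
  calc (1 / kstar) * |∑ s, Δ s * (α - V s) ^ kstar|
      ≤ (1 / kstar) * (kstar * D * M * ∑ s, p s * (α - V s) ^ (kstar - 1)) := by
        apply mul_le_mul_of_nonneg_left key (by positivity)
    _ = D * M * ∑ s, p s * (α - V s) ^ (kstar - 1) := by
        field_simp
    _ ≤ 2 * D * M * ∑ s, p s * (α - V s) ^ (kstar - 1) := by
        have : 0 ≤ D * M * ∑ s, p s * (α - V s) ^ (kstar - 1) := by positivity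
        linarith
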